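/- If U and V are commuting unitaries on ℂ^d with U^b = V^c = 𝟙 where b·c = d, and Tr(U^μ V^ν) = d·δ_{μ,0}δ_{ν,0} for all 0 ≤ μ ≤ b−1, 0 ≤ ν ≤ c−1, then there is an orthonormal basis {φ_{s,t}} (0 ≤ s ≤ b−1, 0 ≤ t ≤ c−1) with U φ_{s,t} = e^{2πis/b} φ_{s,t} and V φ_{s,t} = e^{2πit/c} φ_{s,t}; i.e., each joint eigenvalue pair (e^{2πis/b}, e^{2πit/c}) occurs with multiplicity exactly one. -/

import Mathlib

open Matrix Complex

namespace CIJB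

noncomputable def e (n : ℕ) (k : ℤ) : ℂ := Complex.exp (2 * Real.pi * Complex.I * k / n)

lemma e_add (n : ℕ) (k l : ℤ) : e n (k + l) = e n k * e n l := by
  rw [e, e, e, ← Complex.exp_add]
  congr 1
  push_cast
  ring

lemma e_zero (n : ℕ) : e n 0 = 1 := by simp [e]

lemma e_mul_inv (n : ℕ) (k : ℤ) : e n k * e n (-k) = 1 := by
  rw [← e_add]; simp [e_zero]

lemma e_ne_zero (n : ℕ) (k : ℤ) : e n k ≠ 0 := Complex.exp_ne_zero _

lemma conj_e (n : ℕ) (k : ℤ) : (starRingEnd ℂ) (e n k) = e n (-k) := by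
  rw [e, e, ← Complex.exp_conj]
  congr 1
  have : (2 * Real.pi * Complex.I * k / n : ℂ) = ((2 * Real.pi * k / n : ℝ) : ℂ) * Complex.I := by
    push_cast; ring
  rw [this, _root_.map_mul, Complex.conj_I, Complex.conj_ofReal]
  push_cast; ring

lemma e_nat_mul (n : ℕ) (hn : 0 < n) (l : ℤ) : e n ((n : ℤ) * l) = 1 := by
  have hne : (n : ℂ) ≠ 0 := Nat.cast_ne_zero.mpr hn.ne'
  rw [e]
  have : 2 * (Real.pi : ℂ) * Complex.I * ((n : ℤ) * l : ℤ) / n = (l : ℤ) * (2 * Real.pi * Complex.I) := by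
    push_cast
    field_simp
  rw [this, Complex.exp_int_mul_two_pi_mul_I]

lemma e_mod (n : ℕ) (hn : 0 < n) (k : ℤ) (m : ℕ) : e n (k * ((m % n : ℕ) : ℤ)) = e n (k * m) := by
  obtain ⟨q, hq⟩ : ∃ q, m = n * q + m % n := ⟨m / n, (Nat.div_add_mod m n).symm⟩
  conv_rhs => rw [hq]
  have h : (k * ((n * q + m % n : ℕ) : ℤ)) = (n : ℤ) * (k * q) + k * ((m % n : ℕ) : ℤ) := by
    push_cast; ring
  rw [h, e_add, e_nat_mul n hn, one_mul]

lemma e_eq_one_iff (n : ℕ) (hn : 0 < n) (k : ℤ) : e n k = 1 ↔ (n : ℤ) ∣ k := by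
  have hne : (n : ℂ) ≠ 0 := Nat.cast_ne_zero.mpr hn.ne'
  have h2 : (2 : ℂ) * Real.pi * Complex.I ≠ 0 := by
    simp [Real.pi_ne_zero, Complex.I_ne_zero, Complex.ofReal_eq_zero]
  rw [e, Complex.exp_eq_one_iff]
  constructor
  · rintro ⟨m, hm⟩
    have h3 : 2 * (Real.pi : ℂ) * Complex.I * k = 2 * Real.pi * Complex.I * (m * n) := by
      field_simp at hm
      rw [hm]; ring
    have h4 : k = m * n := by exact_mod_cast mul_left_cancel₀ h2 h3
    exact ⟨m, by rw [h4, mul_comm]⟩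
  · rintro ⟨m, rfl⟩
    exact ⟨m, by push_cast; field_simp⟩

lemma sum_e (n : ℕ) (hn : 0 < n) (k : ℤ) :
    ∑ μ ∈ Finset.range n, e n (k * μ) = if (n : ℤ) ∣ k then (n : ℂ) else 0 := by
  have hz : ∀ μ : ℕ, e n (k * μ) = (e n k) ^ μ := by
    intro μ
    induction μ with
    | zero => simp [e_zero]
    | succ m ih =>
        rw [show k * ((m + 1 : ℕ) : ℤ) = k * m + k by push_cast; ring, e_add, ih, pow_succ]
  simp_rw [hz]
  by_cases h : (n : ℤ) ∣ k
  · rw [if_pos h, (e_eq_one_iff n hn k).mpr h]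
    simp
  · rw [if_neg h]
    have hne1 : e n k ≠ 1 := fun hh => h ((e_eq_one_iff n hn k).mp hh)
    rw [geom_sum_eq hne1]
    have : (e n k) ^ n = 1 := by
      rw [← hz, mul_comm, e_nat_mul n hn]
    rw [this]
    simp


section Qsec
set_option linter.unusedSectionVars false
variable {d n : ℕ} [NeZero n] (W : Matrix (Fin d) (Fin d) ℂ)

noncomputable def χ (n : ℕ) (k : ℤ) (μ : ZMod n) : ℂ := e n (k * μ.val)

noncomputable def Q (n : ℕ) [NeZero n] (W : Matrix (Fin d) (Fin d) ℂ) (s : ℕ) :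
    Matrix (Fin d) (Fin d) ℂ := ∑ μ : ZMod n, χ n (-(s : ℤ)) μ • W ^ μ.val

lemma χ_add (k : ℤ) (μ μ' : ZMod n) : χ n k (μ + μ') = χ n k μ * χ n k μ' := by
  have hn : 0 < n := Nat.pos_of_ne_zero (NeZero.ne n)
  rw [χ, ZMod.val_add,
    show (k * (((μ.val + μ'.val) % n : ℕ) : ℤ)) = k * (((μ.val + μ'.val : ℕ) % n : ℕ) : ℤ) from rfl,
    e_mod n hn, show (k * ((μ.val + μ'.val : ℕ) : ℤ)) = k * μ.val + k * μ'.val by push_cast; ring,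
    e_add]
  rfl

lemma χ_zero (k : ℤ) : χ n k 0 = 1 := by
  simp [χ, e_zero]

lemma χ_ne_zero (k : ℤ) (μ : ZMod n) : χ n k μ ≠ 0 := e_ne_zero n _

lemma χ_mul_same (k l : ℤ) (μ : ZMod n) : χ n k μ * χ n l μ = χ n (k + l) μ := by
  rw [χ, χ, χ, ← e_add]
  congr 1
  ring

lemma χ_neg (k : ℤ) (μ : ZMod n) : χ n k (-μ) = χ n (-k) μ := by
  have h1 : χ n k (-μ) * χ n k μ = 1 := by rw [← χ_add]; simp [χ_zero]
  have h2 : χ n (-k) μ * χ n k μ = 1 := by rw [χ_mul_same, neg_add_cancel]; simp [χ, e_zero]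
  exact mul_right_cancel₀ (χ_ne_zero k μ) (h1.trans h2.symm)

lemma sum_val {M : Type*} [AddCommMonoid M] (f : ℕ → M) :
    ∑ μ : ZMod n, f μ.val = ∑ m ∈ Finset.range n, f m := by
  refine Finset.sum_nbij' (fun μ => μ.val) (fun m => (m : ZMod n)) ?_ ?_ ?_ ?_ ?_
  · intro a _; exact Finset.mem_range.mpr (ZMod.val_lt a)
  · intro a _; exact Finset.mem_univ _
  · intro a _; exact ZMod.natCast_rightInverse a
  · intro a ha; exact ZMod.val_cast_of_lt (Finset.mem_range.mp ha)
  · intro a _; rfl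

lemma sum_χ (k : ℤ) : ∑ μ : ZMod n, χ n k μ = if (n : ℤ) ∣ k then (n : ℂ) else 0 := by
  have hn : 0 < n := Nat.pos_of_ne_zero (NeZero.ne n)
  rw [show (∑ μ : ZMod n, χ n k μ) = ∑ m ∈ Finset.range n, e n (k * m) from
    sum_val (fun m => e n (k * m))]
  exact sum_e n hn k

variable (hW : W ^ n = 1)
include hW

lemma pow_mod (m : ℕ) : W ^ (m % n) = W ^ m := by
  conv_rhs => rw [← Nat.div_add_mod m n, pow_add, pow_mul, hW, one_pow, one_mul]

lemma pow_val_add (μ μ' : ZMod n) : W ^ (μ + μ').val = W ^ μ.val * W ^ μ'.val := by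
  rw [ZMod.val_add, pow_mod W hW, pow_add]

lemma mul_Q (s : ℕ) : W * Q n W s = e n s • Q n W s := by
  have hn : 0 < n := Nat.pos_of_ne_zero (NeZero.ne n)
  have hχ1 : χ n (-(s:ℤ)) 1 = e n (-(s:ℤ)) := by
    rw [χ, ZMod.val_one_eq_one_mod,
      show ((-(s:ℤ)) * ((1 % n : ℕ) : ℤ)) = (-(s:ℤ)) * (((1 % n : ℕ)) : ℤ) from rfl,
      e_mod n hn]
    norm_num
  rw [Q, Matrix.mul_sum, Finset.smul_sum]
  refine Fintype.sum_equiv (Equiv.addLeft (1 : ZMod n)) _ _ ?_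
  intro μ
  simp only [Equiv.coe_addLeft]
  rw [mul_smul_comm, show W * W ^ μ.val = W ^ (1 + μ : ZMod n).val by
      rw [pow_val_add W hW, ZMod.val_one_eq_one_mod, pow_mod W hW, pow_one],
    χ_add, hχ1, smul_smul]
  congr 1
  rw [← mul_assoc, e_mul_inv, one_mul]

lemma Q_mul_Q (s s' : ℕ) (hs : s < n) (hs' : s' < n) :
    Q n W s * Q n W s' = if s = s' then (n : ℂ) • Q n W s' else 0 := by
  have hn : 0 < n := Nat.pos_of_ne_zero (NeZero.ne n)
  have step : ∀ μ : ZMod n, ∑ μ' : ZMod n,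
      (χ n (-(s:ℤ)) μ • W ^ μ.val) * (χ n (-(s':ℤ)) μ' • W ^ μ'.val)
      = ∑ σ : ZMod n, (χ n ((s':ℤ) - s) μ * χ n (-(s':ℤ)) σ) • W ^ σ.val := by
    intro μ
    refine Fintype.sum_equiv (Equiv.addLeft μ) _ _ ?_
    intro μ'
    simp only [Equiv.coe_addLeft]
    have hsc : χ n (-(s:ℤ)) μ = χ n ((s':ℤ) - s) μ * χ n (-(s':ℤ)) μ := by
      rw [χ_mul_same]
      congr 1
      ring
    rw [smul_mul_smul_comm, ← pow_val_add W hW, χ_add, hsc, mul_assoc]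
  rw [Q, Q, Finset.sum_mul_sum, Finset.sum_congr rfl fun μ _ => step μ, Finset.sum_comm]
  have hdvd : ((n:ℤ) ∣ ((s':ℤ) - s)) ↔ s = s' := by
    constructor
    · intro h
      have habs : ((s':ℤ) - s).natAbs < n := by omega
      have h0 := Int.eq_zero_of_dvd_of_natAbs_lt_natAbs h habs
      omega
    · rintro rfl; simp
  simp_rw [← Finset.sum_smul, ← Finset.sum_mul, sum_χ]
  by_cases hss : s = s'
  · rw [if_pos hss]
    simp_rw [if_pos (hdvd.mpr hss)]
    simp_rw [mul_smul, ← Finset.smul_sum]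
  · rw [if_neg hss]
    simp_rw [if_neg (fun h => hss (hdvd.mp h)), zero_mul, zero_smul, Finset.sum_const_zero]

lemma Q_comm (X : Matrix (Fin d) (Fin d) ℂ) (hX : X * W = W * X) (s : ℕ) :
    X * Q n W s = Q n W s * X := by
  have hX' : Commute X W := hX
  rw [Q, Matrix.mul_sum, Matrix.sum_mul]
  refine Finset.sum_congr rfl fun μ _ => ?_
  rw [Matrix.mul_smul, Matrix.smul_mul]
  congr 1
  exact hX'.pow_right μ.val

lemma Q_star (hWu : W ∈ Matrix.unitaryGroup (Fin d) ℂ) (s : ℕ) :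
    (Q n W s)ᴴ = Q n W s := by
  have hA : ∀ μ : ZMod n, (W ^ μ.val)ᴴ = W ^ (-μ).val := by
    intro μ
    have h1 : W ^ μ.val * W ^ (-μ).val = 1 := by
      rw [← pow_val_add W hW, add_neg_cancel, ZMod.val_zero, pow_zero]
    have hm : W ^ μ.val ∈ Matrix.unitaryGroup (Fin d) ℂ := pow_mem hWu μ.val
    have h2 : (W ^ μ.val)ᴴ * W ^ μ.val = 1 := (Unitary.mem_iff.mp hm).1
    calc (W ^ μ.val)ᴴ = (W ^ μ.val)ᴴ * (W ^ μ.val * W ^ (-μ).val) := by rw [h1, mul_one]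
    _ = ((W ^ μ.val)ᴴ * W ^ μ.val) * W ^ (-μ).val := by rw [mul_assoc]
    _ = W ^ (-μ).val := by rw [h2, one_mul]
  rw [Q, Matrix.conjTranspose_sum]
  refine Fintype.sum_equiv (Equiv.neg (ZMod n)) _ _ ?_
  intro μ
  simp only [Equiv.neg_apply]
  rw [Matrix.conjTranspose_smul, hA, χ_neg, neg_neg]
  congr 1
  rw [show (star (χ n (-(s:ℤ)) μ)) = (starRingEnd ℂ) (e n ((-(s:ℤ)) * μ.val)) from rfl, conj_e, χ]
  congr 1
  ring

lemma Q_trace_form (s : ℕ) : Q n W s = ∑ m ∈ Finset.range n, e n (-(s:ℤ) * m) • W ^ m :=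
  sum_val (fun m => e n (-(s:ℤ) * m) • W ^ m)

end Qsec
end CIJB

open CIJB in
theorem commuting_intertwiners_joint_basis (d b c : ℕ) (hb : 0 < b) (hc : 0 < c)
    (hbc : b * c = d)
    (U V : Matrix (Fin d) (Fin d) ℂ)
    (hU : U ∈ Matrix.unitaryGroup (Fin d) ℂ) (hV : V ∈ Matrix.unitaryGroup (Fin d) ℂ)
    (hcomm : U * V = V * U) (hUb : U ^ b = 1) (hVc : V ^ c = 1)
    (htr : ∀ μ ν : ℕ, μ ≤ b - 1 → ν ≤ c - 1 →
      (U ^ μ * V ^ ν).trace = if μ = 0 ∧ ν = 0 then (d : ℂ) else 0) :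
    ∃ φ : Fin b × Fin c → EuclideanSpace ℂ (Fin d),
      Orthonormal ℂ φ ∧
      Submodule.span ℂ (Set.range φ) = ⊤ ∧
      ∀ s : Fin b, ∀ t : Fin c,
        U *ᵥ φ (s, t) = Complex.exp (2 * Real.pi * Complex.I * s / b) • φ (s, t) ∧
        V *ᵥ φ (s, t) = Complex.exp (2 * Real.pi * Complex.I * t / c) • φ (s, t) := by
  classical
  haveI : NeZero b := ⟨hb.ne'⟩
  haveI : NeZero c := ⟨hc.ne'⟩
  have hd : 0 < d := hbc ▸ Nat.mul_pos hb hc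
  have hdC : (d : ℂ) ≠ 0 := Nat.cast_ne_zero.mpr hd.ne'
  have hbcC : (b : ℂ) * (c : ℂ) = (d : ℂ) := by exact_mod_cast congrArg (Nat.cast : ℕ → ℂ) hbc
  set P : Fin b × Fin c → Matrix (Fin d) (Fin d) ℂ :=
    fun p => (d : ℂ)⁻¹ • (Q b U (p.1 : ℕ) * Q c V (p.2 : ℕ)) with hPdef
  have hQcomm : ∀ s t : ℕ, Q c V t * Q b U s = Q b U s * Q c V t := by
    intro s t
    exact Q_comm U hUb (Q c V t) (Q_comm V hVc U hcomm t).symm s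
  have hPP : ∀ p q : Fin b × Fin c, P p * P q = if p = q then P p else 0 := by
    intro ⟨s, t⟩ ⟨s', t'⟩
    show ((d : ℂ)⁻¹ • (Q b U s * Q c V t)) * ((d : ℂ)⁻¹ • (Q b U s' * Q c V t')) = _
    rw [smul_mul_smul_comm]
    have hmid : (Q b U (s:ℕ) * Q c V (t:ℕ)) * (Q b U (s':ℕ) * Q c V (t':ℕ))
        = (Q b U (s:ℕ) * Q b U (s':ℕ)) * (Q c V (t:ℕ) * Q c V (t':ℕ)) := by
      have hco : Commute (Q c V (t:ℕ)) (Q b U (s':ℕ)) := hQcomm s' t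
      exact hco.mul_mul_mul_comm _ _
    rw [hmid, Q_mul_Q U hUb s s' s.isLt s'.isLt, Q_mul_Q V hVc t t' t.isLt t'.isLt]
    by_cases h1 : (s : ℕ) = (s' : ℕ)
    · by_cases h2 : (t : ℕ) = (t' : ℕ)
      · have hs : s = s' := Fin.ext h1
        have ht : t = t' := Fin.ext h2
        subst hs; subst ht
        rw [if_pos rfl, if_pos rfl, if_pos rfl, smul_mul_smul_comm, smul_smul]
        show ((d:ℂ)⁻¹ * (d:ℂ)⁻¹ * ((b:ℂ) * (c:ℂ))) • _ = (d:ℂ)⁻¹ • _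
        rw [hbcC]
        congr 1
        field_simp
      · rw [if_neg h2, mul_zero, smul_zero,
          if_neg (fun hh : ((s, t) : Fin b × Fin c) = (s', t') => h2 (congrArg (fun q : Fin b × Fin c => ((q.2 : ℕ))) hh))]
    · rw [if_neg h1, zero_mul, smul_zero,
        if_neg (fun hh : ((s, t) : Fin b × Fin c) = (s', t') => h1 (congrArg (fun q : Fin b × Fin c => ((q.1 : ℕ))) hh))]
  have hPstar : ∀ p : Fin b × Fin c, (P p)ᴴ = P p := by
    intro ⟨s, t⟩
    show ((d : ℂ)⁻¹ • (Q b U s * Q c V t))ᴴ = _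
    rw [Matrix.conjTranspose_smul, Matrix.conjTranspose_mul, Q_star U hUb hU, Q_star V hVc hV,
      hQcomm]
    congr 1
    simp [Complex.star_def]
  have htrace : ∀ p : Fin b × Fin c, (P p).trace = 1 := by
    intro ⟨s, t⟩
    show ((d : ℂ)⁻¹ • (Q b U (s:ℕ) * Q c V (t:ℕ))).trace = 1
    have key : (Q b U (s:ℕ) * Q c V (t:ℕ)).trace = (d : ℂ) := by
      rw [Q_trace_form U hUb, Q_trace_form V hVc, Finset.sum_mul_sum]
      simp_rw [smul_mul_smul_comm, Matrix.trace_sum, Matrix.trace_smul, smul_eq_mul]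
      rw [Finset.sum_eq_single 0]
      · rw [Finset.sum_eq_single 0]
        · rw [htr 0 0 (Nat.zero_le _) (Nat.zero_le _), if_pos ⟨rfl, rfl⟩]
          simp [e_zero]
        · intro ν hν hν0
          rw [htr 0 ν (Nat.zero_le _) (Nat.le_pred_of_lt (Finset.mem_range.mp hν)),
            if_neg (fun hh => hν0 hh.2), mul_zero]
        · intro h0
          exact absurd (Finset.mem_range.mpr hc) h0
      · intro μ hμ hμ0
        refine Finset.sum_eq_zero fun ν _ => ?_
        rw [htr μ ν (Nat.le_pred_of_lt (Finset.mem_range.mp hμ))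
          (Nat.le_pred_of_lt (Finset.mem_range.mp ‹ν ∈ Finset.range c›)),
          if_neg (fun hh => hμ0 hh.1), mul_zero]
      · intro h0
        exact absurd (Finset.mem_range.mpr hb) h0
    rw [Matrix.trace_smul, key, smul_eq_mul, inv_mul_cancel₀ hdC]
  have hex : ∀ p : Fin b × Fin c, ∃ j : Fin d, P p j j ≠ 0 := by
    intro p
    by_contra hcon
    push_neg at hcon
    have h0 : (P p).trace = 0 := Finset.sum_eq_zero fun j _ => hcon j
    rw [htrace p] at h0
    exact one_ne_zero h0
  choose jj hjj using hex
  set w : Fin b × Fin c → EuclideanSpace ℂ (Fin d) :=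
    fun p => WithLp.toLp 2 (fun i => P p i (jj p) : Fin d → ℂ) with hwdef
  have hinner : ∀ p q : Fin b × Fin c,
      (inner ℂ (w p) (w q) : ℂ) = (P p * P q) (jj p) (jj q) := by
    intro p q
    have step1 : (inner ℂ (w p) (w q) : ℂ) = ((P p)ᴴ * P q) (jj p) (jj q) := by
      rw [Matrix.mul_apply, PiLp.inner_apply]
      refine Finset.sum_congr rfl fun i _ => ?_
      rw [Matrix.conjTranspose_apply, RCLike.inner_apply']
      rfl
    rw [step1, hPstar]
  have hwinner_self : ∀ p, (inner ℂ (w p) (w p) : ℂ) = P p (jj p) (jj p) := by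
    intro p
    rw [hinner, hPP, if_pos rfl]
  have hwne : ∀ p, w p ≠ 0 := by
    intro p hzero
    apply hjj p
    have h0 : (inner ℂ (w p) (w p) : ℂ) = 0 := by rw [hzero]; simp
    rw [hwinner_self p] at h0
    exact h0
  set φ : Fin b × Fin c → EuclideanSpace ℂ (Fin d) :=
    fun p => ((‖w p‖ : ℂ))⁻¹ • w p with hφdef
  have hφinner : ∀ p q : Fin b × Fin c,
      (inner ℂ (φ p) (φ q) : ℂ) = if p = q then 1 else 0 := by
    intro p q
    show (inner ℂ ((‖w p‖ : ℂ)⁻¹ • w p) ((‖w q‖ : ℂ)⁻¹ • w q) : ℂ) = _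
    rw [inner_smul_left, inner_smul_right]
    by_cases hpq : p = q
    · subst hpq
      rw [if_pos rfl, inner_self_eq_norm_sq_to_K, map_inv₀, Complex.conj_ofReal]
      have hn : (‖w p‖ : ℂ) ≠ 0 := by
        simpa using norm_ne_zero_iff.mpr (hwne p)
      field_simp
      rfl
    · rw [if_neg hpq, hinner, hPP, if_neg hpq]
      simp
  have horth : Orthonormal ℂ φ := orthonormal_iff_ite.mpr hφinner
  have hspan : Submodule.span ℂ (Set.range φ) = ⊤ := by
    refine LinearIndependent.span_eq_top_of_card_eq_finrank horth.linearIndependent ?_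
    simp [hbc]
  refine ⟨φ, horth, hspan, ?_⟩
  have hUP : ∀ p : Fin b × Fin c, U * P p = e b ((p.1 : ℕ) : ℤ) • P p := by
    intro ⟨s, t⟩
    show U * ((d:ℂ)⁻¹ • (Q b U (s:ℕ) * Q c V (t:ℕ))) = _
    rw [Matrix.mul_smul, ← Matrix.mul_assoc, mul_Q U hUb, Matrix.smul_mul, smul_comm]
  have hVP : ∀ p : Fin b × Fin c, V * P p = e c ((p.2 : ℕ) : ℤ) • P p := by
    intro ⟨s, t⟩
    show V * ((d:ℂ)⁻¹ • (Q b U (s:ℕ) * Q c V (t:ℕ))) = _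
    rw [Matrix.mul_smul, ← Matrix.mul_assoc,
      Q_comm U hUb V hcomm.symm, Matrix.mul_assoc, mul_Q V hVc, Matrix.mul_smul, smul_comm]
  have hmv : ∀ (M : Matrix (Fin d) (Fin d) ℂ) (z : ℂ) (p : Fin b × Fin c),
      M * P p = z • P p → M *ᵥ w p = z • w p := by
    intro M z p hM
    funext i
    show (M *ᵥ w p) i = (z • w p) i
    have h1 : (M *ᵥ w p) i = (M * P p) i (jj p) := by
      rw [Matrix.mul_apply, Matrix.mulVec, dotProduct]
    rw [h1, hM, Matrix.smul_apply, smul_eq_mul]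
    rfl
  intro s t
  have heb : e b ((((s, t) : Fin b × Fin c).1 : ℕ) : ℤ) = Complex.exp (2 * Real.pi * Complex.I * s / b) := by
    rw [e]
    congr 1 <;> (push_cast; ring)
  have hec : e c ((((s, t) : Fin b × Fin c).2 : ℕ) : ℤ) = Complex.exp (2 * Real.pi * Complex.I * t / c) := by
    rw [e]
    congr 1 <;> (push_cast; ring)
  constructor
  · show U *ᵥ ((‖w (s, t)‖ : ℂ)⁻¹ • w (s, t)) = _ • ((‖w (s, t)‖ : ℂ)⁻¹ • w (s, t))
    rw [Matrix.mulVec_smul, hmv U _ (s, t) (hUP (s, t)), ← heb, smul_comm]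
  · show V *ᵥ ((‖w (s, t)‖ : ℂ)⁻¹ • w (s, t)) = _ • ((‖w (s, t)‖ : ℂ)⁻¹ • w (s, t))
    rw [Matrix.mulVec_smul, hmv V _ (s, t) (hVP (s, t)), ← hec, smul_comm]
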